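/- For s = 0, the Hadjicostas integral gives ∬_{[0,1]²} (1−x)/(1−xy) dx dy = ζ(2) − 1. -/

import Mathlib

open MeasureTheory Real intervalIntegral

-- single term integral over y
lemma term_int (c : ℝ) (n : ℕ) :
    ∫ y in (0:ℝ)..1, c * y ^ n = c / (n + 1) := by
  rw [intervalIntegral.integral_const_mul, integral_pow]
  push_cast
  ring

lemma inner_eq (x : ℝ) (hx : x ∈ Set.Ioc (0:ℝ) 1) :
    (∫ y in (0:ℝ)..1, (1 - x) / (1 - x * y)) = ∑' n : ℕ, (1 - x) * x ^ n / (n + 1) := by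
  rcases eq_or_lt_of_le hx.2 with h1 | h1
  · simp [← h1]
  have hx0 := hx.1
  have key : ∀ y ∈ Set.Ioc (0:ℝ) 1, HasSum (fun n : ℕ => (1 - x) * (x * y) ^ n)
      ((1 - x) / (1 - x * y)) := by
    intro y hy
    have hxy0 : 0 ≤ x * y := mul_nonneg hx0.le hy.1.le
    have hxy1 : x * y < 1 := lt_of_le_of_lt (by nlinarith [hy.2] : x * y ≤ x) h1
    have := (hasSum_geometric_of_lt_one hxy0 hxy1).mul_left (1 - x)
    simpa [div_eq_mul_inv] using this
  rw [intervalIntegral.integral_of_le zero_le_one]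
  have hint : ∀ n : ℕ, IntegrableOn (fun y : ℝ => (1 - x) * (x * y) ^ n) (Set.Ioc 0 1) := by
    intro n
    apply Continuous.integrableOn_Ioc
    continuity
  have hnorm : (fun n : ℕ => ∫ y in Set.Ioc (0:ℝ) 1, ‖(1 - x) * (x * y) ^ n‖) =
      fun n : ℕ => (1 - x) * x ^ n / (n + 1) := by
    funext n
    rw [setIntegral_congr_fun measurableSet_Ioc (g := fun y => ((1-x) * x ^ n) * y ^ n)]
    · rw [← intervalIntegral.integral_of_le zero_le_one, term_int]
    · intro y hy
      simp only [Real.norm_of_nonneg (mul_nonneg (by linarith : (0:ℝ) ≤ 1 - x)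
        (pow_nonneg (mul_nonneg hx0.le hy.1.le) n))]
      ring
  have swap := integral_tsum_of_summable_integral_norm (μ := volume.restrict (Set.Ioc (0:ℝ) 1))
      (F := fun (n : ℕ) (y : ℝ) => (1 - x) * (x * y) ^ n) hint ?_
  · rw [setIntegral_congr_ae measurableSet_Ioc
      (g := fun y => ∑' n : ℕ, (1 - x) * (x * y) ^ n) ?_, ← swap]
    · congr 1
      funext n
      rw [setIntegral_congr_fun measurableSet_Ioc (g := fun y => ((1-x) * x ^ n) * y ^ n)
        (fun y _ => by ring), ← intervalIntegral.integral_of_le zero_le_one, term_int]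
    · filter_upwards with y hy
      exact ((key y hy).tsum_eq).symm
  · rw [hnorm]
    apply Summable.of_nonneg_of_le (fun n => div_nonneg (mul_nonneg (by linarith) (by positivity)) (by positivity)) (fun n => ?_)
      (summable_geometric_of_lt_one hx0.le h1)
    rw [div_le_iff₀ (by positivity)]
    nlinarith [pow_nonneg hx0.le n, pow_le_one₀ hx0.le h1.le (n := n), (Nat.cast_nonneg n : (0:ℝ) ≤ n)]

lemma term2 (n : ℕ) :
    ∫ x in (0:ℝ)..1, (1 - x) * x ^ n / (n + 1) = 1 / ((n + 1) ^ 2 * (n + 2)) := by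
  have h : ∀ x : ℝ, (1 - x) * x ^ n / ((n : ℝ) + 1)
      = x ^ n * (1 / ((n:ℝ)+1)) - x ^ (n+1) * (1 / ((n:ℝ)+1)) := by
    intro x
    have : ((n:ℝ) + 1) ≠ 0 := by positivity
    field_simp
    ring
  simp_rw [h]
  rw [intervalIntegral.integral_sub ((intervalIntegral.intervalIntegrable_pow n).mul_const _)
    ((intervalIntegral.intervalIntegrable_pow (n+1)).mul_const _),
    intervalIntegral.integral_mul_const, intervalIntegral.integral_mul_const,
    integral_pow, integral_pow]
  have h1 : ((n:ℝ) + 1) ≠ 0 := by positivity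
  have h2 : ((n:ℝ) + 2) ≠ 0 := by positivity
  push_cast
  field_simp
  ring

lemma sum_sq : HasSum (fun n : ℕ => 1 / ((n : ℝ) + 1) ^ 2) (π ^ 2 / 6) := by
  have := (hasSum_nat_add_iff (f := fun n : ℕ => (1:ℝ) / (n:ℝ) ^ 2) 1).mpr
    (by simpa using hasSum_zeta_two)
  simpa using this

lemma sum_tel : HasSum (fun n : ℕ => 1 / ((n : ℝ) + 1) - 1 / ((n : ℝ) + 2)) 1 := by
  have hsum : Summable (fun n : ℕ => 1 / ((n : ℝ) + 1) - 1 / ((n : ℝ) + 2)) := by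
    apply Summable.of_nonneg_of_le (fun n => ?_) (fun n => ?_) sum_sq.summable
    · rw [sub_nonneg]
      apply one_div_le_one_div_of_le (by positivity) (by linarith)
    · have h1 : ((n:ℝ) + 1) ≠ 0 := by positivity
      have h2 : ((n:ℝ) + 2) ≠ 0 := by positivity
      rw [div_sub_div _ _ h1 h2, div_le_div_iff₀ (by positivity) (by positivity)]
      ring_nf
      nlinarith [sq_nonneg ((n:ℝ)+1), (Nat.cast_nonneg n : (0:ℝ) ≤ n)]
  rw [hsum.hasSum_iff_tendsto_nat]
  have key : ∀ N : ℕ, ∑ n ∈ Finset.range N, (1 / ((n : ℝ) + 1) - 1 / ((n : ℝ) + 2))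
      = 1 - 1 / ((N : ℝ) + 1) := by
    intro N
    induction N with
    | zero => simp
    | succ k ih =>
      rw [Finset.sum_range_succ, ih]
      have h1 : ((k:ℝ) + 1) ≠ 0 := by positivity
      have h2 : ((k:ℝ) + 2) ≠ 0 := by positivity
      push_cast
      field_simp
      ring
  simp_rw [key]
  simpa using (tendsto_const_nhds (x := (1:ℝ))).sub tendsto_one_div_add_atTop_nhds_zero_nat

lemma total_sum : HasSum (fun n : ℕ => 1 / (((n:ℝ) + 1) ^ 2 * ((n:ℝ) + 2))) (π ^ 2 / 6 - 1) := by
  have := sum_sq.sub sum_tel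
  convert this using 1
  case e'_3 => rfl
  funext n
  have h1 : ((n:ℝ) + 1) ≠ 0 := by positivity
  have h2 : ((n:ℝ) + 2) ≠ 0 := by positivity
  field_simp
  ring

theorem hadjicostas_s_zero :
    (↑(∫ x in (0:ℝ)..1, ∫ y in (0:ℝ)..1, (1 - x) / (1 - x * y)) : ℂ)
      = riemannZeta 2 - 1 := by
  have hreal : (∫ x in (0:ℝ)..1, ∫ y in (0:ℝ)..1, (1 - x) / (1 - x * y))
      = π ^ 2 / 6 - 1 := by
    rw [intervalIntegral.integral_of_le zero_le_one,
      setIntegral_congr_fun measurableSet_Ioc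
        (g := fun x : ℝ => ∑' n : ℕ, (1 - x) * x ^ n / ((n:ℝ) + 1)) (fun x hx => inner_eq x hx)]
    have hint : ∀ n : ℕ, IntegrableOn (fun x : ℝ => (1 - x) * x ^ n / ((n:ℝ) + 1))
        (Set.Ioc 0 1) := by
      intro n
      apply Continuous.integrableOn_Ioc
      continuity
    have hval : ∀ n : ℕ, ∫ x in Set.Ioc (0:ℝ) 1, (1 - x) * x ^ n / ((n:ℝ) + 1)
        = 1 / (((n:ℝ) + 1) ^ 2 * ((n:ℝ) + 2)) := by
      intro n
      rw [← intervalIntegral.integral_of_le zero_le_one, term2]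
    have hnormval : ∀ n : ℕ, ∫ x in Set.Ioc (0:ℝ) 1, ‖(1 - x) * x ^ n / ((n:ℝ) + 1)‖
        = 1 / (((n:ℝ) + 1) ^ 2 * ((n:ℝ) + 2)) := by
      intro n
      rw [← hval n]
      apply setIntegral_congr_fun measurableSet_Ioc
      intro x hx
      exact Real.norm_of_nonneg (div_nonneg (mul_nonneg (by linarith [hx.2])
        (pow_nonneg hx.1.le n)) (by positivity))
    have hsum : Summable fun n : ℕ => ∫ x in Set.Ioc (0:ℝ) 1, ‖(1 - x) * x ^ n / ((n:ℝ) + 1)‖ := by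
      simp_rw [hnormval]
      apply Summable.of_nonneg_of_le (fun n => by positivity) (fun n => ?_) sum_sq.summable
      apply one_div_le_one_div_of_le (by positivity)
      nlinarith [sq_nonneg ((n:ℝ)+1), (Nat.cast_nonneg n : (0:ℝ) ≤ n)]
    rw [← integral_tsum_of_summable_integral_norm hint hsum]
    rw [show (fun n : ℕ => ∫ x in Set.Ioc (0:ℝ) 1, (1 - x) * x ^ n / ((n:ℝ) + 1))
      = fun n : ℕ => 1 / (((n:ℝ) + 1) ^ 2 * ((n:ℝ) + 2)) from funext hval]
    exact total_sum.tsum_eq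
  rw [hreal, riemannZeta_two]
  push_cast
  ring
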